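/- For every nonzero ideal I of R, the relative ideal norm (from S down to R) of the extended ideal I·S (the ideal of S generated by the image of I) equals I^n, where n = [L : K] is the degree of the extension. -/

import Mathlib

open nonZeroDivisors

attribute [local instance] FractionRing.liftAlgebra FractionRing.isScalarTower_liftAlgebra

section Aux

variable (A K L B : Type*) [CommRing A] [CommRing B] [Algebra A B] [Field K] [Field L]
    [Algebra A K] [IsFractionRing A K] [Algebra B L]
    [Algebra K L] [Algebra A L] [IsScalarTower A B L] [IsScalarTower A K L]
    [IsIntegralClosure B A L] [FiniteDimensional K L]
    [IsDomain A] [IsIntegrallyClosed A] [IsDomain B] [IsIntegrallyClosed B]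
    [NoZeroSMulDivisors A B] [IsFractionRing B L]

lemma aux_sep [Algebra.IsSeparable K L] :
    Algebra.IsSeparable (FractionRing A) (FractionRing B) := by
  have H : RingHom.comp (algebraMap (FractionRing A) (FractionRing B))
      ↑(FractionRing.algEquiv A K).symm.toRingEquiv =
        RingHom.comp ↑(FractionRing.algEquiv B L).symm.toRingEquiv (algebraMap K L) := by
    apply IsLocalization.ringHom_ext A⁰
    ext
    simp only [AlgEquiv.toRingEquiv_eq_coe, RingHom.coe_comp, RingHom.coe_coe,
      AlgEquiv.coe_ringEquiv, Function.comp_apply, AlgEquiv.commutes,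
      ← IsScalarTower.algebraMap_apply]
    rw [IsScalarTower.algebraMap_apply A B L, AlgEquiv.commutes,
      ← IsScalarTower.algebraMap_apply]
  exact Algebra.IsSeparable.of_equiv_equiv _ _ H

variable [Module.Finite A B]
variable [Algebra.IsSeparable (FractionRing A) (FractionRing B)]

lemma aux_intNorm_algebraMap (a : A) :
    Algebra.intNorm A B (algebraMap A B a) = a ^ Module.finrank K L := by
  apply IsFractionRing.injective A K
  rw [Algebra.algebraMap_intNorm (L := L), map_pow, ← IsScalarTower.algebraMap_apply,
    IsScalarTower.algebraMap_apply A K L, Algebra.norm_algebraMap]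

lemma aux_span_singleton (x : B) :
    Ideal.span (Algebra.intNorm A B '' ((Ideal.span {x} : Ideal B) : Set B)) =
      Ideal.span {Algebra.intNorm A B x} := by
  apply le_antisymm
  · rw [Ideal.span_le]
    rintro _ ⟨y, hy, rfl⟩
    rw [SetLike.mem_coe, Ideal.mem_span_singleton] at hy ⊢
    exact map_dvd _ hy
  · rw [Ideal.span_singleton_le_iff_mem]
    exact Ideal.subset_span ⟨x, Ideal.subset_span rfl, rfl⟩

variable {Aₘ Bₘ : Type*} [CommRing Aₘ] [CommRing Bₘ] [Algebra Aₘ Bₘ] [Algebra A Aₘ]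
    [Algebra B Bₘ] [Algebra A Bₘ] [IsScalarTower A Aₘ Bₘ] [IsScalarTower A B Bₘ]
    (M : Submonoid A) [IsLocalization M Aₘ]
    [IsLocalization (Algebra.algebraMapSubmonoid B M) Bₘ]
    [IsDomain Aₘ] [IsIntegrallyClosed Aₘ] [IsDomain Bₘ] [IsIntegrallyClosed Bₘ]
    [NoZeroSMulDivisors Aₘ Bₘ] [Module.Finite Aₘ Bₘ]
    [Algebra.IsSeparable (FractionRing Aₘ) (FractionRing Bₘ)]

include K L M in
lemma aux_span_localization (J : Ideal B) :
    Ideal.span (Algebra.intNorm Aₘ Bₘ '' ((J.map (algebraMap B Bₘ) : Ideal Bₘ) : Set Bₘ)) =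
      (Ideal.span (Algebra.intNorm A B '' (J : Set B))).map (algebraMap A Aₘ) := by
  apply le_antisymm
  · rw [Ideal.span_le]
    rintro _ ⟨x, hx, rfl⟩
    rw [SetLike.mem_coe] at hx
    rw [SetLike.mem_coe]
    rw [IsLocalization.mem_map_algebraMap_iff (Algebra.algebraMapSubmonoid B M) Bₘ,
      Prod.exists] at hx
    obtain ⟨⟨y, hy⟩, ⟨_, ⟨s, hs, rfl⟩⟩, hxy⟩ := hx
    have e1 := Algebra.intNorm_eq_of_isLocalization (A := A) (B := B) (Aₘ := Aₘ) (Bₘ := Bₘ) M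
      (algebraMap A B s)
    have e2 := Algebra.intNorm_eq_of_isLocalization (A := A) (B := B) (Aₘ := Aₘ) (Bₘ := Bₘ) M y
    have h1 : Algebra.intNorm Aₘ Bₘ x *
        algebraMap A Aₘ (Algebra.intNorm A B (algebraMap A B s)) =
        algebraMap A Aₘ (Algebra.intNorm A B y) := by
      rw [e1, e2, ← map_mul, hxy]
    have hunit : IsUnit (algebraMap A Aₘ (Algebra.intNorm A B (algebraMap A B s))) := by
      rw [aux_intNorm_algebraMap A K L B s]
      exact IsLocalization.map_units Aₘ ⟨s ^ Module.finrank K L, pow_mem hs _⟩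
    obtain ⟨u, hu⟩ := hunit
    have hx' : Algebra.intNorm Aₘ Bₘ x = algebraMap A Aₘ (Algebra.intNorm A B y) * ↑u⁻¹ := by
      rw [← h1, ← hu, mul_assoc, Units.mul_inv, mul_one]
    rw [hx']
    exact Ideal.mul_mem_right _ _ (Ideal.mem_map_of_mem _ (Ideal.subset_span ⟨y, hy, rfl⟩))
  · rw [Ideal.map_span, Ideal.span_le]
    rintro _ ⟨_, ⟨y, hy, rfl⟩, rfl⟩
    rw [SetLike.mem_coe,
      Algebra.intNorm_eq_of_isLocalization (A := A) (B := B) (Aₘ := Aₘ) (Bₘ := Bₘ) M y]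
    exact Ideal.subset_span ⟨_, Ideal.mem_map_of_mem _ hy, rfl⟩

end Aux

set_option maxHeartbeats 1000000 in
set_option synthInstance.maxHeartbeats 200000 in
/-- Let `R` be a Dedekind domain with fraction field `K`, `L/K` a finite
separable extension of degree `n`, and `S = integralClosure R L`.  For every nonzero ideal `I`
of `R`, the relative ideal norm of the extended ideal `I·S` — the ideal of `R` generated by
the elements of `R` whose image in `K` is the field norm `N_{L/K}(x)` of some `x ∈ I·S` —
equals `I ^ n`. -/
theorem relNorm_map_eq_pow
    (R : Type*) [CommRing R] [IsDomain R] [IsDedekindDomain R]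
    (K L : Type*) [Field K] [Field L] [Algebra R K] [IsFractionRing R K]
    [Algebra K L] [Algebra R L] [IsScalarTower R K L]
    [FiniteDimensional K L] [Algebra.IsSeparable K L]
    (I : Ideal R) (hI : I ≠ ⊥) :
    Ideal.span {r : R | ∃ x ∈ Ideal.map (algebraMap R (integralClosure R L)) I,
        algebraMap R K r = Algebra.norm K (x : L)}
      = I ^ (Module.finrank K L) := by
  classical
  have hRL : Function.Injective (algebraMap R L) := by
    rw [IsScalarTower.algebraMap_eq R K L]
    exact (algebraMap K L).injective.comp (IsFractionRing.injective R K)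
  have hRS : Function.Injective (algebraMap R (integralClosure R L)) := fun a b e => hRL (by
    rw [IsScalarTower.algebraMap_apply R (integralClosure R L) L, e, ← IsScalarTower.algebraMap_apply])
  haveI : NoZeroSMulDivisors R L := ⟨fun {c x} hcx => (mul_eq_zero.mp ((Algebra.smul_def c x).symm.trans hcx)).imp_left fun h0 => hRL (h0.trans (map_zero _).symm)⟩
  haveI : NoZeroSMulDivisors R (integralClosure R L) :=
    ⟨fun {c x} hcx => (mul_eq_zero.mp ((Algebra.smul_def c x).symm.trans hcx)).imp_left fun h0 => hRS (h0.trans (map_zero _).symm)⟩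
  haveI : IsFractionRing (integralClosure R L) L :=
    IsIntegralClosure.isFractionRing_of_finite_extension R K L _
  haveI : IsDedekindDomain (integralClosure R L) := integralClosure.isDedekindDomain R K L
  haveI : Module.Finite R (integralClosure R L) := IsIntegralClosure.finite R K L _
  haveI hsep : Algebra.IsSeparable (FractionRing R) (FractionRing (integralClosure R L)) :=
    aux_sep R K L (integralClosure R L)
  have hset : {r : R | ∃ x ∈ Ideal.map (algebraMap R (integralClosure R L)) I,
      algebraMap R K r = Algebra.norm K (x : L)} =
      Algebra.intNorm R (integralClosure R L) ''
        (Ideal.map (algebraMap R (integralClosure R L)) I : Set (integralClosure R L)) := by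
    ext r
    constructor
    · rintro ⟨x, hx, hr⟩
      refine ⟨x, hx, ?_⟩
      apply IsFractionRing.injective R K
      rw [Algebra.algebraMap_intNorm (L := L), hr]
      rfl
    · rintro ⟨x, hx, rfl⟩
      exact ⟨x, hx, by rw [Algebra.algebraMap_intNorm (L := L)]; rfl⟩
  rw [hset]
  by_cases hF : IsField R
  · letI := hF.toField
    rcases I.eq_bot_or_top with h | h
    · exact absurd h hI
    rw [h, Ideal.map_top, Ideal.top_pow, Ideal.eq_top_iff_one]
    exact Ideal.subset_span ⟨1, by simp, map_one _⟩
  refine Ideal.eq_of_localization_maximal fun P hP => ?_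
  haveI := hP.isPrime
  have hP0 : P ≠ ⊥ := Ring.ne_bot_of_isMaximal_of_not_isField hP hF
  have hM : P.primeCompl ≤ R⁰ := P.primeCompl_le_nonZeroDivisors
  letI : Algebra (Localization.AtPrime P) (Localization (Algebra.algebraMapSubmonoid (integralClosure R L) P.primeCompl)) := localizationAlgebra P.primeCompl (integralClosure R L)
  haveI : IsScalarTower R (Localization.AtPrime P) (Localization (Algebra.algebraMapSubmonoid (integralClosure R L) P.primeCompl)) := IsScalarTower.of_algebraMap_eq (fun x =>
    (IsLocalization.map_eq (T := Algebra.algebraMapSubmonoid (integralClosure R L) P.primeCompl)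
      (Q := (Localization (Algebra.algebraMapSubmonoid (integralClosure R L) P.primeCompl))) P.primeCompl.le_comap_map x).symm)
  have h : Algebra.algebraMapSubmonoid (integralClosure R L) P.primeCompl
      ≤ (integralClosure R L)⁰ :=
    map_le_nonZeroDivisors_of_injective _ hRS hM
  haveI : IsDomain (Localization (Algebra.algebraMapSubmonoid (integralClosure R L) P.primeCompl)) := IsLocalization.isDomain_localization h
  haveI : IsDedekindDomain (Localization (Algebra.algebraMapSubmonoid (integralClosure R L) P.primeCompl)) := IsLocalization.isDedekindDomain (integralClosure R L) h _
  haveI : IsDomain (Localization.AtPrime P) := IsLocalization.isDomain_localization hM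
  haveI : IsDedekindDomain (Localization.AtPrime P) := IsLocalization.isDedekindDomain R hM _
  haveI : IsDiscreteValuationRing (Localization.AtPrime P) :=
    IsLocalization.AtPrime.isDiscreteValuationRing_of_dedekind_domain R hP0 _
  haveI : Module.Finite (Localization.AtPrime P) (Localization (Algebra.algebraMapSubmonoid (integralClosure R L) P.primeCompl)) :=
    Module.Finite.of_isLocalization R (integralClosure R L) P.primeCompl
  letI : Algebra (Localization.AtPrime P) K :=
    (IsLocalization.map (M := P.primeCompl) (T := R⁰) K (RingHom.id R) (hM.trans fun _ hx => hx)).toAlgebra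
  haveI : IsScalarTower R (Localization.AtPrime P) K := IsScalarTower.of_algebraMap_eq' (by
    rw [RingHom.algebraMap_toAlgebra, IsLocalization.map_comp, RingHom.comp_id])
  haveI : IsFractionRing (Localization.AtPrime P) K :=
    IsFractionRing.isFractionRing_of_isDomain_of_isLocalization P.primeCompl (Localization.AtPrime P) K
  letI : Algebra (Localization (Algebra.algebraMapSubmonoid (integralClosure R L) P.primeCompl)) L :=
    (IsLocalization.map (M := Algebra.algebraMapSubmonoid (integralClosure R L) P.primeCompl)
      (S := Localization (Algebra.algebraMapSubmonoid (integralClosure R L) P.primeCompl))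
      (T := (integralClosure R L)⁰) L (RingHom.id (integralClosure R L)) h).toAlgebra
  haveI : IsScalarTower (integralClosure R L) (Localization (Algebra.algebraMapSubmonoid (integralClosure R L) P.primeCompl)) L := by
    exact IsScalarTower.of_algebraMap_eq (fun x =>
      (IsLocalization.map_eq (S := Localization (Algebra.algebraMapSubmonoid (integralClosure R L) P.primeCompl))
        (T := (integralClosure R L)⁰) (Q := L) (g := RingHom.id (integralClosure R L))
        (by exact h) x).symm)
  haveI : IsFractionRing (Localization (Algebra.algebraMapSubmonoid (integralClosure R L) P.primeCompl)) L :=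
    IsFractionRing.isFractionRing_of_isDomain_of_isLocalization
      (Algebra.algebraMapSubmonoid (integralClosure R L) P.primeCompl) (Localization (Algebra.algebraMapSubmonoid (integralClosure R L) P.primeCompl)) L
  letI : Algebra (Localization.AtPrime P) L := ((algebraMap K L).comp (algebraMap (Localization.AtPrime P) K)).toAlgebra
  haveI : IsScalarTower (Localization.AtPrime P) K L := IsScalarTower.of_algebraMap_eq' rfl
  haveI : IsScalarTower R (Localization.AtPrime P) L := IsScalarTower.of_algebraMap_eq' (by
    rw [IsScalarTower.algebraMap_eq (Localization.AtPrime P) K L, RingHom.comp_assoc,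
      ← IsScalarTower.algebraMap_eq R (Localization.AtPrime P) K, ← IsScalarTower.algebraMap_eq R K L])
  haveI : IsScalarTower (Localization.AtPrime P) (Localization (Algebra.algebraMapSubmonoid (integralClosure R L) P.primeCompl)) L := by
    apply IsScalarTower.of_algebraMap_eq'
    apply IsLocalization.ringHom_ext P.primeCompl
    rw [RingHom.comp_assoc, ← IsScalarTower.algebraMap_eq R (Localization.AtPrime P) (Localization (Algebra.algebraMapSubmonoid (integralClosure R L) P.primeCompl)),
      ← IsScalarTower.algebraMap_eq R (Localization.AtPrime P) L,
      IsScalarTower.algebraMap_eq R (integralClosure R L) (Localization (Algebra.algebraMapSubmonoid (integralClosure R L) P.primeCompl)), ← RingHom.comp_assoc,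
      ← IsScalarTower.algebraMap_eq (integralClosure R L) (Localization (Algebra.algebraMapSubmonoid (integralClosure R L) P.primeCompl)) L,
      ← IsScalarTower.algebraMap_eq R (integralClosure R L) L]
  have hinj : Function.Injective (algebraMap (Localization.AtPrime P) (Localization (Algebra.algebraMapSubmonoid (integralClosure R L) P.primeCompl))) := by
    have hL : Function.Injective (algebraMap (Localization.AtPrime P) L) := by
      rw [IsScalarTower.algebraMap_eq (Localization.AtPrime P) K L]
      exact (algebraMap K L).injective.comp (IsFractionRing.injective (Localization.AtPrime P) K)
    intro a b e
    apply hL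
    rw [IsScalarTower.algebraMap_apply (Localization.AtPrime P) (Localization (Algebra.algebraMapSubmonoid (integralClosure R L) P.primeCompl)) L, e, ← IsScalarTower.algebraMap_apply]
  haveI : NoZeroSMulDivisors (Localization.AtPrime P) (Localization (Algebra.algebraMapSubmonoid (integralClosure R L) P.primeCompl)) := ⟨fun {c x} hcx => (mul_eq_zero.mp ((Algebra.smul_def c x).symm.trans hcx)).imp_left fun h0 => hinj (h0.trans (map_zero _).symm)⟩
  haveI : IsIntegralClosure (Localization (Algebra.algebraMapSubmonoid (integralClosure R L) P.primeCompl)) (Localization.AtPrime P) L := IsIntegralClosure.of_isIntegrallyClosed _ _ _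
  haveI := aux_sep (Localization.AtPrime P) K L (Localization (Algebra.algebraMapSubmonoid (integralClosure R L) P.primeCompl))
  rw [Ideal.map_pow,
    ← aux_span_localization R K L (integralClosure R L) (Aₘ := (Localization.AtPrime P)) (Bₘ := (Localization (Algebra.algebraMapSubmonoid (integralClosure R L) P.primeCompl))) P.primeCompl
      (I.map (algebraMap R (integralClosure R L)))]
  have hJm : (I.map (algebraMap R (integralClosure R L))).map
        (algebraMap (integralClosure R L) (Localization (Algebra.algebraMapSubmonoid (integralClosure R L) P.primeCompl)))
      = (I.map (algebraMap R (Localization.AtPrime P))).map (algebraMap (Localization.AtPrime P) (Localization (Algebra.algebraMapSubmonoid (integralClosure R L) P.primeCompl))) := by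
    rw [Ideal.map_map, Ideal.map_map, ← IsScalarTower.algebraMap_eq,
      ← IsScalarTower.algebraMap_eq]
  obtain ⟨a, ha⟩ := (IsPrincipalIdealRing.principal (I.map (algebraMap R (Localization.AtPrime P)))).principal
  rw [Ideal.submodule_span_eq] at ha
  rw [hJm, ha, Ideal.map_span, Set.image_singleton, aux_span_singleton (Localization.AtPrime P) (Localization (Algebra.algebraMapSubmonoid (integralClosure R L) P.primeCompl)),
    aux_intNorm_algebraMap (Localization.AtPrime P) K L (Localization (Algebra.algebraMapSubmonoid (integralClosure R L) P.primeCompl)) a, Ideal.span_singleton_pow]
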